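/- Every entry e_k^j of Euler's difference table is divisible by j!. -/
import Mathlib


/-- Euler's difference table: diagonal `eulerE j j = j!` and
`eulerE k j = eulerE k (j+1) - eulerE (k-1) j`. -/
def eulerE : ℕ → ℕ → ℤ
  | k, j =>
    if _h : k ≤ j then (Nat.factorial k : ℤ)
    else eulerE k (j + 1) - eulerE (k - 1) j
  termination_by k j => k - j
  decreasing_by all_goals omega

lemma factorial_dvd_eulerE_aux (n : ℕ) : ∀ k j, j ≤ k → 2 * k - j ≤ n →
    (Nat.factorial j : ℤ) ∣ eulerE k j := by
  induction n with
  | zero =>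
    intro k j h hn
    have : k = j := by omega
    subst this
    rw [eulerE]
    simp
  | succ n ih =>
    intro k j h hn
    rw [eulerE]
    split
    · next hkj =>
      have : k = j := le_antisymm hkj h
      subst this
      simp
    · next hkj =>
      have h1 : (Nat.factorial (j + 1) : ℤ) ∣ eulerE k (j + 1) :=
        ih k (j + 1) (by omega) (by omega)
      have h2 : (Nat.factorial j : ℤ) ∣ eulerE (k - 1) j :=
        ih (k - 1) j (by omega) (by omega)
      exact dvd_sub (dvd_trans (by exact_mod_cast Nat.factorial_dvd_factorial (by omega)) h1) h2

theorem factorial_dvd_eulerE (k j : ℕ) (h : j ≤ k) :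
    (Nat.factorial j : ℤ) ∣ eulerE k j :=
  factorial_dvd_eulerE_aux (2 * k - j) k j h le_rfl
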